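/- Let d ≥ 1 and α ∈ ℝ^d. Assume there exist constants C > 0 and L > 0 such that for every p ∈ ℤ^d and every integer q ≥ 1, one has ‖α − p/q‖ ≥ C q^{-L}. Then there exist constants C' > 0 and N > 0 such that for every ξ ∈ ℤ \ {0}, max_{1 ≤ ℓ ≤ d} |exp(2πi ξ α_ℓ) − 1| ≥ C' |ξ|^{-N}. -/

import Mathlib

lemma abs_exp_I_sub_one (θ : ℝ) :
    ‖Complex.exp (θ * Complex.I) - 1‖ = 2 * |Real.sin (θ / 2)| := by
  have h1 : Complex.exp (θ * Complex.I) - 1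
      = ((Real.cos θ - 1 : ℝ) : ℂ) + ((Real.sin θ : ℝ) : ℂ) * Complex.I := by
    rw [Complex.exp_mul_I]
    push_cast
    ring
  rw [h1, Complex.norm_add_mul_I]
  have hcθ : Real.cos θ = 2 * Real.cos (θ/2) ^ 2 - 1 := by
    have := Real.cos_two_mul (θ/2)
    rw [show 2 * (θ/2) = θ by ring] at this
    linarith
  have hpc : Real.sin (θ/2) ^ 2 + Real.cos (θ/2) ^ 2 = 1 := Real.sin_sq_add_cos_sq _
  have hpc2 : Real.sin θ ^ 2 + Real.cos θ ^ 2 = 1 := Real.sin_sq_add_cos_sq _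
  have h2 : (Real.cos θ - 1) ^ 2 + Real.sin θ ^ 2 = (2 * |Real.sin (θ/2)|) ^ 2 := by
    rw [mul_pow, _root_.sq_abs]
    nlinarith
  rw [h2, Real.sqrt_sq (by positivity)]

lemma four_dist_le (y : ℝ) (hy : |y| ≤ 1/2) :
    4 * |y| ≤ ‖Complex.exp ((2 * Real.pi * y) * Complex.I) - 1‖ := by
  have habs := abs_exp_I_sub_one (2 * Real.pi * y)
  rw [show ((2 * Real.pi * y : ℝ) : ℂ) = 2 * (Real.pi : ℂ) * (y : ℂ) by push_cast; ring,
    show (2 * Real.pi * y) / 2 = Real.pi * y by ring] at habs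
  rw [habs]
  have hsin : 2 * |y| ≤ |Real.sin (Real.pi * y)| := by
    have hb : Real.pi * |y| ≤ Real.pi / 2 := by
      nlinarith [Real.pi_pos]
    have := Real.mul_le_sin (x := Real.pi * |y|) (by positivity) hb
    have he : |Real.sin (Real.pi * y)| = Real.sin (Real.pi * |y|) := by
      rcases abs_cases y with ⟨h1, _⟩ | ⟨h1, _⟩
      · rw [h1]
        exact abs_of_nonneg (by
          apply Real.sin_nonneg_of_nonneg_of_le_pi (by positivity)
          nlinarith [Real.pi_pos, abs_nonneg y, hy, h1.symm ▸ hy])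
      · rw [h1, show Real.pi * -y = -(Real.pi * y) by ring, Real.sin_neg, ← abs_neg]
        exact abs_of_nonneg (by
          rw [← Real.sin_neg]
          apply Real.sin_nonneg_of_nonneg_of_le_pi
          · nlinarith [Real.pi_pos]
          · nlinarith [Real.pi_pos])
    rw [he]
    calc 2 * |y| = 2 / Real.pi * (Real.pi * |y|) := by
          field_simp
      _ ≤ Real.sin (Real.pi * |y|) := this
  linarith

/-- The Euclidean norm of a vector in `ℝ^d` (presented as `Fin d → ℝ`). -/
noncomputable def eunorm {k : ℕ} (v : Fin k → ℝ) : ℝ :=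
  ‖(EuclideanSpace.equiv (Fin k) ℝ).symm v‖

lemma eunorm_eq {k : ℕ} (v : Fin k → ℝ) : eunorm v = Real.sqrt (∑ i, (v i) ^ 2) := by
  simp [eunorm, EuclideanSpace.norm_eq, Real.norm_eq_abs, sq_abs]

/-- Let `α ∈ ℝ^d` satisfy the non-Liouville Diophantine estimate: there are `C, L > 0` with
`‖α - p/q‖ ≥ C q^{-L}` for every `p ∈ ℤ^d` and every integer `q ≥ 1`. Then there are
`C', N > 0` such that for every `ξ ∈ ℤ ∖ {0}`,
`max_{1 ≤ ℓ ≤ d} |exp(2πi ξ α_ℓ) - 1| ≥ C' |ξ|^{-N}`. -/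
theorem stmt1 (d : ℕ) (hd : 1 ≤ d) (α : Fin d → ℝ) (C L : ℝ) (hC : 0 < C) (hL : 0 < L)
    (h : ∀ (p : Fin d → ℤ) (q : ℕ), 1 ≤ q →
      C * (q : ℝ) ^ (-L) ≤ eunorm (fun ℓ => α ℓ - (p ℓ : ℝ) / (q : ℝ))) :
    ∃ (C' N : ℝ), 0 < C' ∧ 0 < N ∧ ∀ ξ : ℤ, ξ ≠ 0 →
      ∃ ℓ : Fin d, C' * |(ξ : ℝ)| ^ (-N) ≤
        ‖Complex.exp (2 * Real.pi * Complex.I * (((ξ : ℝ) * α ℓ : ℝ) : ℂ)) - 1‖ := by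
  have hd0 : (0:ℝ) < Real.sqrt d := Real.sqrt_pos.2 (by exact_mod_cast hd)
  refine ⟨4 * C / Real.sqrt d, L, by positivity, hL, ?_⟩
  intro ξ hξ
  have hξR : ((ξ:ℝ)) ≠ 0 := Int.cast_ne_zero.2 hξ
  set q : ℕ := ξ.natAbs with hqdef
  have hq1 : 1 ≤ q := Int.natAbs_pos.2 hξ
  have hq0 : (q:ℝ) ≠ 0 := by simp [hqdef, Int.natAbs_ne_zero, hξ]
  have hqabs : (q:ℝ) = |(ξ:ℝ)| := by
    rw [hqdef, Nat.cast_natAbs, Int.cast_abs]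
  have hq1R : (1:ℝ) ≤ |(ξ:ℝ)| := by
    rw [← hqabs]; exact_mod_cast hq1
  set r : Fin d → ℤ := fun i => round ((ξ:ℝ) * α i) with hrdef
  set p : Fin d → ℤ := fun i => ξ.sign * r i with hpdef
  have key := h p q hq1
  -- rewrite the vector
  have hsq : ((ξ.sign : ℝ)) * (q:ℝ) = (ξ:ℝ) := by
    rw [hqdef, Nat.cast_natAbs]; exact_mod_cast Int.sign_mul_abs ξ
  have hs2 : ((ξ.sign : ℝ))^2 = 1 := by
    rcases hξ.lt_or_gt with hl | hl <;>
      simp [Int.sign_eq_neg_one_of_neg, Int.sign_eq_one_of_pos, hl]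
  have hsx : ((ξ.sign : ℝ)) * (ξ:ℝ) = (q:ℝ) := by
    calc ((ξ.sign : ℝ)) * (ξ:ℝ) = ((ξ.sign:ℝ))^2 * (q:ℝ) := by rw [← hsq]; ring
    _ = (q:ℝ) := by rw [hs2]; ring
  have hv : ∀ i, α i - (p i : ℝ) / (q : ℝ) = ((ξ:ℝ) * α i - (r i : ℝ)) / (ξ:ℝ) := by
    intro i
    rw [hpdef]
    push_cast
    field_simp
    linear_combination (-(r i : ℝ)) * hsx
  simp only [hv] at key
  -- pick the maximizing coordinate
  obtain ⟨ℓ, -, hmax⟩ := Finset.exists_max_image Finset.univ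
    (fun i => |(ξ:ℝ) * α i - (r i : ℝ)|) ⟨⟨0, hd⟩, Finset.mem_univ _⟩
  set M : ℝ := |(ξ:ℝ) * α ℓ - (r ℓ : ℝ)| with hMdef
  have hM0 : 0 ≤ M := abs_nonneg _
  -- norm bound
  have hnorm : eunorm (fun i => ((ξ:ℝ) * α i - (r i : ℝ)) / (ξ:ℝ))
      ≤ Real.sqrt d * (M / |(ξ:ℝ)|) := by
    rw [eunorm_eq]
    have hsum : (∑ i, (((ξ:ℝ) * α i - (r i : ℝ)) / (ξ:ℝ)) ^ 2)
        ≤ (d : ℝ) * (M / |(ξ:ℝ)|) ^ 2 := by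
      calc (∑ i, (((ξ:ℝ) * α i - (r i : ℝ)) / (ξ:ℝ)) ^ 2)
          ≤ ∑ _i : Fin d, (M / |(ξ:ℝ)|) ^ 2 := by
            apply Finset.sum_le_sum
            intro i _
            rw [div_pow, div_pow, ← sq_abs ((ξ:ℝ) * α i - (r i : ℝ)), sq_abs ((ξ:ℝ))]
            rw [← sq_abs ((ξ:ℝ))]
            apply div_le_div_of_nonneg_right ?_ (by positivity) |>.trans_eq rfl
            · exact pow_le_pow_left₀ (abs_nonneg _) (hmax i (Finset.mem_univ i)) 2
        _ = (d : ℝ) * (M / |(ξ:ℝ)|) ^ 2 := by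
            rw [Finset.sum_const, Finset.card_univ, Fintype.card_fin, nsmul_eq_mul]
    calc Real.sqrt (∑ i, (((ξ:ℝ) * α i - (r i : ℝ)) / (ξ:ℝ)) ^ 2)
        ≤ Real.sqrt ((d : ℝ) * (M / |(ξ:ℝ)|) ^ 2) := Real.sqrt_le_sqrt hsum
      _ = Real.sqrt d * (M / |(ξ:ℝ)|) := by
          rw [Real.sqrt_mul (by positivity), Real.sqrt_sq (by positivity)]
  have hMlb : C * |(ξ:ℝ)| ^ (-L) / Real.sqrt d ≤ M := by
    have h1 : C * (q:ℝ) ^ (-L) ≤ Real.sqrt d * (M / |(ξ:ℝ)|) := key.trans hnorm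
    rw [hqabs] at h1
    have hξpos : (0:ℝ) < |(ξ:ℝ)| := by positivity
    have hrp : (0:ℝ) < |(ξ:ℝ)| ^ (-L) := Real.rpow_pos_of_pos hξpos _
    -- M ≥ C * |ξ|^{-L} * |ξ| / √d ≥ C * |ξ|^{-L} / √d
    have h2 : C * |(ξ:ℝ)| ^ (-L) * |(ξ:ℝ)| ≤ Real.sqrt d * M := by
      have := mul_le_mul_of_nonneg_right h1 (le_of_lt hξpos)
      calc C * |(ξ:ℝ)| ^ (-L) * |(ξ:ℝ)| ≤ Real.sqrt d * (M / |(ξ:ℝ)|) * |(ξ:ℝ)| := this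
        _ = Real.sqrt d * M := by field_simp
    rw [div_le_iff₀ hd0]
    calc C * |(ξ:ℝ)| ^ (-L) ≤ C * |(ξ:ℝ)| ^ (-L) * |(ξ:ℝ)| := by nlinarith [mul_nonneg (mul_pos hC hrp).le (sub_nonneg.2 hq1R)]
      _ ≤ Real.sqrt d * M := h2
      _ = M * Real.sqrt d := by ring
  refine ⟨ℓ, ?_⟩
  -- reduce the exponential
  set y : ℝ := (ξ:ℝ) * α ℓ - (r ℓ : ℝ) with hydef
  have hy : |y| ≤ 1/2 := abs_sub_round _
  have hexp : Complex.exp (2 * Real.pi * Complex.I * (((ξ : ℝ) * α ℓ : ℝ) : ℂ))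
      = Complex.exp (((2 * Real.pi * y : ℝ) : ℂ) * Complex.I) := by
    have hsplit : (((ξ : ℝ) * α ℓ : ℝ) : ℂ) = (y : ℂ) + ((r ℓ : ℤ) : ℂ) := by
      push_cast [hydef]
      ring
    rw [hsplit, show 2 * (Real.pi:ℂ) * Complex.I * ((y:ℂ) + ((r ℓ : ℤ) : ℂ))
        = ((2 * Real.pi * y : ℝ) : ℂ) * Complex.I + ((r ℓ : ℤ) : ℂ) * (2 * Real.pi * Complex.I)
        by push_cast; ring,
      Complex.exp_add, Complex.exp_int_mul_two_pi_mul_I, mul_one]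
  rw [hexp]
  have hfinal := four_dist_le y hy
  have hcast : ((2 * Real.pi * y : ℝ) : ℂ) = 2 * (Real.pi:ℂ) * (y:ℂ) := by push_cast; ring
  calc (4 * C / Real.sqrt d) * |(ξ:ℝ)| ^ (-L)
      = 4 * (C * |(ξ:ℝ)| ^ (-L) / Real.sqrt d) := by ring
    _ ≤ 4 * M := by linarith
    _ = 4 * |y| := by rw [hMdef, hydef]
    _ ≤ _ := by
        rw [hcast]
        exact hfinal
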